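/- The Minkowski question mark function satisfies ?(x) − 1/2 ≤ 201(x − 1/2) for all x ∈ [1/2, 2/3]. -/

import Mathlib

/-- The mediant of two rationals, formed from numerators and denominators
of the reduced fractions. -/
def mediant (a b : ℚ) : ℚ := ((a.num + b.num : ℤ) : ℚ) / ((a.den + b.den : ℕ) : ℚ)

/-- `sb n j` is the `j`-th element `ξ_{j,n}` of the Stern–Brocot sequence `F_n`:
`F_0 = {0/1, 1/1}` and `F_{n+1}` is obtained from `F_n` by inserting the mediant
between every pair of consecutive elements. -/
def sb : ℕ → ℕ → ℚ
  | 0, j => if j = 0 then 0 else 1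
  | n + 1, j => if j % 2 = 0 then sb n (j / 2) else mediant (sb n (j / 2)) (sb n (j / 2 + 1))

open scoped Classical in
/-- The Minkowski question mark function, defined (as in the paper) as the limit
distribution function of the Stern–Brocot sequences:
`?(x) = lim_n |F_n ∩ [0,x]| / 2^n = sup { j/2^n : ξ_{j,n} ≤ x }`. -/
noncomputable def questionMark (x : ℝ) : ℝ :=
  sSup {y : ℝ | ∃ n j : ℕ, j ≤ 2 ^ n ∧ ((sb n j : ℝ) ≤ x) ∧ y = (j : ℝ) / 2 ^ n}

lemma sb_even (n m : ℕ) : sb (n+1) (2*m) = sb n m := by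
  simp [sb, Nat.mul_mod_right, Nat.mul_div_cancel_left]

lemma sb_odd (n m : ℕ) : sb (n+1) (2*m+1) = mediant (sb n m) (sb n (m+1)) := by
  have h1 : (2*m+1) % 2 = 1 := by omega
  have h2 : (2*m+1) / 2 = m := by omega
  simp [sb, h1, h2]

lemma left_lt_mediant {a b : ℚ} (h : a < b) : a < mediant a b := by
  have ha : (0:ℚ) < (a.den:ℚ) := by exact_mod_cast a.den_pos
  have hb : (0:ℚ) < (b.den:ℚ) := by exact_mod_cast b.den_pos
  have key : (a.num:ℚ) * b.den < (b.num:ℚ) * a.den := by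
    have h' : (a.num:ℚ)/(a.den:ℚ) < (b.num:ℚ)/(b.den:ℚ) := by
      rw [Rat.num_div_den, Rat.num_div_den]; exact h
    rwa [div_lt_div_iff₀ ha hb] at h'
  calc a = (a.num:ℚ)/(a.den:ℚ) := (Rat.num_div_den a).symm
    _ < mediant a b := by
        unfold mediant
        rw [div_lt_div_iff₀ ha (by push_cast; positivity)]
        push_cast
        nlinarith [key]

lemma mediant_lt_right {a b : ℚ} (h : a < b) : mediant a b < b := by
  have ha : (0:ℚ) < (a.den:ℚ) := by exact_mod_cast a.den_pos
  have hb : (0:ℚ) < (b.den:ℚ) := by exact_mod_cast b.den_pos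
  have key : (a.num:ℚ) * b.den < (b.num:ℚ) * a.den := by
    have h' : (a.num:ℚ)/(a.den:ℚ) < (b.num:ℚ)/(b.den:ℚ) := by
      rw [Rat.num_div_den, Rat.num_div_den]; exact h
    rwa [div_lt_div_iff₀ ha hb] at h'
  calc mediant a b < (b.num:ℚ)/(b.den:ℚ) := by
        unfold mediant
        rw [div_lt_div_iff₀ (by push_cast; positivity) hb]
        push_cast
        nlinarith [key]
    _ = b := Rat.num_div_den b

lemma q_num_den (p q : ℕ) (hq : 0 < q) (h : Nat.Coprime p q) :
    ((p:ℚ)/(q:ℚ)).num = p ∧ ((p:ℚ)/(q:ℚ)).den = q := by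
  have hb0 : (0:ℤ) < (q:ℤ) := by exact_mod_cast hq
  have h' : Nat.Coprime ((p:ℤ)).natAbs ((q:ℤ)).natAbs := by simpa using h
  have e : ((p:ℤ):ℚ) = (p:ℚ) := by push_cast; ring
  have e2 : ((q:ℤ):ℚ) = (q:ℚ) := by push_cast; ring
  constructor
  · have := Rat.num_div_eq_of_coprime hb0 h'
    rw [e, e2] at this; exact_mod_cast this
  · have := Rat.den_div_eq_of_coprime hb0 h'
    rw [e, e2] at this; exact_mod_cast this

lemma sb_one : sb 1 1 = 1/2 := by
  have h := sb_odd 0 0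
  simp only [Nat.mul_zero, Nat.zero_add] at h
  rw [show (1:ℕ) = 2*0+1 by norm_num, sb_odd]
  show mediant (sb 0 0) (sb 0 1) = 1/2
  have h0 : sb 0 0 = 0 := by simp [sb]
  have h1 : sb 0 1 = 1 := by simp [sb]
  rw [h0, h1]
  simp [mediant]

lemma sb_mul_pow (n j k : ℕ) : sb (n + k) (j * 2^k) = sb n j := by
  induction k with
  | zero => simp
  | succ k ih =>
      have e : j * 2^(k+1) = 2*(j*2^k) := by ring
      have e2 : n + (k+1) = (n+k)+1 := by omega
      rw [e, e2, sb_even, ih]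

lemma sb_half (k : ℕ) : sb (k+2) (2^(k+1)) = 1/2 := by
  have := sb_mul_pow 1 1 (k+1)
  rw [show 1 + (k+1) = k+2 by omega, one_mul, sb_one] at this
  exact this

lemma copr (k : ℕ) : Nat.Coprime (k+2) (2*k+3) := by
  have h1 : Nat.gcd (k+2) (2*k+3) ∣ k+2 := Nat.gcd_dvd_left _ _
  have h2 : Nat.gcd (k+2) (2*k+3) ∣ 2*k+3 := Nat.gcd_dvd_right _ _
  have h3 : Nat.gcd (k+2) (2*k+3) ∣ 2*(k+2) - (2*k+3) := Nat.dvd_sub (h1.mul_left 2) h2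
  have h4 : 2*(k+2) - (2*k+3) = 1 := by omega
  rw [h4] at h3
  exact Nat.dvd_one.mp h3

lemma mediant_half (p q : ℕ) (hq : 0 < q) (h : Nat.Coprime p q) :
    mediant ((1:ℚ)/2) ((p:ℚ)/(q:ℚ)) = ((1+p:ℕ):ℚ)/((2+q:ℕ):ℚ) := by
  obtain ⟨hn, hd⟩ := q_num_den p q hq h
  have h2 := q_num_den 1 2 (by norm_num) (by norm_num)
  simp only [Nat.cast_one, Nat.cast_ofNat] at h2
  simp only [mediant, hn, hd, h2.1, h2.2]
  push_cast
  ring_nf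

lemma sb_z (k : ℕ) : sb (k+2) (2^(k+1)+1) = ((k:ℚ)+2)/(2*(k:ℚ)+3) := by
  induction k with
  | zero =>
      rw [show (2:ℕ)^(0+1)+1 = 2*1+1 by norm_num, show (0:ℕ)+2 = 1+1 by norm_num, sb_odd, sb_one]
      have h2 : sb 1 2 = 1 := by
        rw [show (2:ℕ) = 2*1 by norm_num, sb_even]; simp [sb]
      rw [h2]
      have hn : (1/2 : ℚ).num = 1 ∧ (1/2 : ℚ).den = 2 := by
        have := q_num_den 1 2 (by norm_num) (by norm_num)
        simpa using this
      simp [mediant, hn.1, hn.2]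
      rw [show Int.sign 2 = 1 by rfl]; norm_num
  | succ k ih =>
      have ih' : sb (k+2) (2^(k+1)+1) = ((k+2:ℕ):ℚ)/((2*k+3:ℕ):ℚ) := by
        rw [ih]; push_cast; ring_nf
      have e : (2:ℕ)^(k+1+1)+1 = 2*(2^(k+1))+1 := by ring
      rw [show k+1+2 = (k+2)+1 by omega, e, sb_odd, sb_half, ih',
        mediant_half (k+2) (2*k+3) (by omega) (copr k)]
      push_cast; ring_nf

lemma sb_lt_succ : ∀ n j, j < 2^n → sb n j < sb n (j+1) := by
  intro n
  induction n with
  | zero =>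
      intro j h
      have : j = 0 := by simpa using h
      subst this
      norm_num [sb]
  | succ n ih =>
      intro j h
      have hpow : (2:ℕ)^(n+1) = 2*2^n := by rw [pow_succ]; ring
      rcases Nat.even_or_odd j with ⟨m, hm⟩ | ⟨m, hm⟩
      · have hm' : j = 2*m := by omega
        subst hm'
        rw [sb_even, sb_odd]
        exact left_lt_mediant (ih m (by omega))
      · subst hm
        rw [sb_odd, show 2*m+1+1 = 2*(m+1) by ring, sb_even]
        exact mediant_lt_right (ih m (by omega))

lemma sb_lt {n : ℕ} : ∀ {i j : ℕ}, i < j → j ≤ 2^n → sb n i < sb n j := by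
  intro i j
  induction j with
  | zero => omega
  | succ j ih =>
      intro hij hj
      rcases Nat.lt_or_ge i j with h | h
      · exact (ih h (by omega)).trans (sb_lt_succ n j (by omega))
      · have : i = j := by omega
        subst this
        exact sb_lt_succ n i (by omega)

private theorem questionMark_sub_half_le_aux (x : ℝ) (hx : x ∈ Set.Icc (1 / 2 : ℝ) (2 / 3)) :
    (sSup {y : ℝ | ∃ n j : ℕ, j ≤ 2 ^ n ∧ ((sb n j : ℝ) ≤ x) ∧ y = (j : ℝ) / 2 ^ n}) - 1 / 2
      ≤ 201 * (x - 1 / 2) := by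
  obtain ⟨hx1, hx2⟩ := hx
  have h0 : (0:ℝ) ≤ 1/2 + 201*(x - 1/2) := by linarith
  have hsup : (sSup {y : ℝ | ∃ n j : ℕ, j ≤ 2 ^ n ∧ ((sb n j : ℝ) ≤ x) ∧ y = (j : ℝ) / 2 ^ n})
      ≤ 1/2 + 201*(x - 1/2) := by
    apply Real.sSup_le _ h0
    rintro y ⟨n, j, hj, hsb, rfl⟩
    by_cases hcase : (j:ℝ)/2^n ≤ 1/2
    · linarith
    push_neg at hcase
    have ht0 : (0:ℝ) < (j:ℝ)/2^n - 1/2 := by linarith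
    have hj1 : (j:ℝ)/2^n ≤ 1 := by
      rw [div_le_one (by positivity)]
      exact_mod_cast hj
    -- find k with 1/2^(k+2) < t ≤ 1/2^(k+1)
    have hex : ∃ k : ℕ, (1:ℝ)/2^(k+2) < (j:ℝ)/2^n - 1/2 := by
      obtain ⟨m, hm⟩ := exists_pow_lt_of_lt_one ht0 (by norm_num : (1:ℝ)/2 < 1)
      refine ⟨m, lt_of_le_of_lt ?_ hm⟩
      rw [div_pow, one_pow]
      apply div_le_div_of_nonneg_left (by norm_num) (by positivity)
      exact pow_le_pow_right₀ (by norm_num) (by omega)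
    classical
    set k := Nat.find hex with hkdef
    have hk1 : (1:ℝ)/2^(k+2) < (j:ℝ)/2^n - 1/2 := Nat.find_spec hex
    have hk2 : (j:ℝ)/2^n - 1/2 ≤ (1:ℝ)/2^(k+1) := by
      rcases Nat.eq_zero_or_pos k with h0k | h0k
      · rw [h0k]; norm_num; linarith
      · have hmin := Nat.find_min hex (m := k-1) (by omega)
        push_neg at hmin
        have e : k-1+2 = k+1 := by omega
        rw [e] at hmin
        exact hmin
    -- integer index comparison
    have hidx : (2^(k+1)+1) * 2^n < j * 2^(k+2) := by
      have hn2 : (0:ℝ) < (2:ℝ)^n := by positivity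
      have h1' : ((1:ℝ)/2^(k+2) + 1/2) * 2^n < (j:ℝ) := by
        rw [← lt_div_iff₀ hn2]; linarith
      have h2 : ((2:ℝ)^(k+1)+1) * 2^n < (j:ℝ) * 2^(k+2) := by
        have e : ((1:ℝ)/2^(k+2) + 1/2) * 2^n * 2^(k+2) = ((2:ℝ)^(k+1)+1) * 2^n := by
          have hkp : ((2:ℝ)^(k+2)) ≠ 0 := by positivity
          field_simp
          ring
        calc ((2:ℝ)^(k+1)+1) * 2^n = ((1:ℝ)/2^(k+2) + 1/2) * 2^n * 2^(k+2) := e.symm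
          _ < (j:ℝ) * 2^(k+2) := by
              have hkp : (0:ℝ) < (2:ℝ)^(k+2) := by positivity
              exact mul_lt_mul_of_pos_right h1' hkp
      exact_mod_cast h2
    have hjn : j * 2^(k+2) ≤ 2^(n+k+2) := by
      calc j*2^(k+2) ≤ 2^n * 2^(k+2) := Nat.mul_le_mul_right _ hj
        _ = 2^(n+k+2) := (pow_add 2 n (k+2)).symm
    have hmono : sb (n+k+2) ((2^(k+1)+1) * 2^n) < sb (n+k+2) (j * 2^(k+2)) :=
      sb_lt hidx hjn
    have e1 : sb (n+k+2) ((2^(k+1)+1) * 2^n) = sb (k+2) (2^(k+1)+1) := by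
      rw [show n+k+2 = (k+2)+n by omega]
      exact sb_mul_pow (k+2) (2^(k+1)+1) n
    have e2 : sb (n+k+2) (j * 2^(k+2)) = sb n j := sb_mul_pow n j (k+2)
    rw [e1, e2, sb_z] at hmono
    have hr : (((k:ℝ)+2)/(2*(k:ℝ)+3)) < ((sb n j : ℚ) : ℝ) := by
      have := hmono
      have hcast : (((((k:ℚ)+2)/(2*(k:ℚ)+3)) : ℚ) : ℝ) < ((sb n j : ℚ) : ℝ) := by
        exact_mod_cast this
      convert hcast using 1
      push_cast
      ring
    have hx3 : ((k:ℝ)+2)/(2*(k:ℝ)+3) < x := lt_of_lt_of_le hr hsb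
    have hks : (0:ℝ) < 2*(k:ℝ)+3 := by positivity
    have hd : ((k:ℝ)+2)/(2*(k:ℝ)+3) - 1/2 = 1/(2*(2*(k:ℝ)+3)) := by
      field_simp
      ring
    have hC : (2*(k:ℝ)+3) ≤ 201 * 2^k := by
      have h1 : (k:ℝ) < 2^k := by exact_mod_cast Nat.lt_two_pow_self (n := k)
      have h2 : (1:ℝ) ≤ 2^k := by exact_mod_cast Nat.one_le_pow k 2 (by norm_num)
      nlinarith
    have hstep : (1:ℝ)/2^(k+1) ≤ 201/(2*(2*(k:ℝ)+3)) := by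
      rw [div_le_div_iff₀ (by positivity) (by positivity)]
      have e : (2:ℝ)^(k+1) = 2*2^k := by rw [pow_succ]; ring
      nlinarith [pow_pos (show (0:ℝ)<2 by norm_num) k]
    have hxlb : 1/(2*(2*(k:ℝ)+3)) < x - 1/2 := by rw [← hd]; linarith
    have hfin : (j:ℝ)/2^n - 1/2 ≤ 201*(x - 1/2) := by
      have h201 : (201:ℝ)/(2*(2*(k:ℝ)+3)) ≤ 201*(x-1/2) := by
        rw [div_eq_mul_one_div]
        nlinarith
      linarith
    linarith
  linarith


/-- The Minkowski question mark function satisfies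
`?(x) − 1/2 ≤ 201(x − 1/2)` for all `x ∈ [1/2, 2/3]`. -/
theorem questionMark_sub_half_le (x : ℝ) (hx : x ∈ Set.Icc (1 / 2 : ℝ) (2 / 3)) :
    questionMark x - 1 / 2 ≤ 201 * (x - 1 / 2) := by
  have h := questionMark_sub_half_le_aux x hx
  unfold questionMark
  exact h
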